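/- Let v̂ be a nondecreasing submodular valuation satisfying S3 on K goods, and let 0 ≤ L ≤ K. Then the L-satiation v of v̂, defined by v(A) = max over B ⊆ A with |B| ≤ L of v̂(B), is also nondecreasing, submodular, and satisfies S3. -/
import Mathlib

def DoubleMax (x y z : ℝ) : Prop :=
  (x = max x (max y z) ∧ y = max x (max y z)) ∨
  (x = max x (max y z) ∧ z = max x (max y z)) ∨
  (y = max x (max y z) ∧ z = max x (max y z))

lemma dm_cases {a b c : ℝ} (h : DoubleMax a b c) :
    (a = b ∧ c ≤ a) ∨ (a = c ∧ b ≤ a) ∨ (b = c ∧ a ≤ b) := by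
  rcases h with ⟨h1, h2⟩ | ⟨h1, h2⟩ | ⟨h1, h2⟩
  · refine Or.inl ⟨h1.trans h2.symm, ?_⟩
    rw [h1]; exact le_max_of_le_right (le_max_right _ _)
  · refine Or.inr (Or.inl ⟨h1.trans h2.symm, ?_⟩)
    rw [h1]; exact le_max_of_le_right (le_max_left _ _)
  · refine Or.inr (Or.inr ⟨h1.trans h2.symm, ?_⟩)
    rw [h1]; exact le_max_left _ _

lemma dm_of {a b c : ℝ} (h1 : a ≤ max b c) (h2 : b ≤ max a c) (h3 : c ≤ max a b) :
    DoubleMax a b c := by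
  rcases le_total b c with hbc | hbc
  · have hac : a ≤ c := le_trans h1 (by rw [max_eq_right hbc])
    have hM : max a (max b c) = c := by
      rw [max_eq_right hbc, max_eq_right hac]
    rcases le_max_iff.mp h3 with h | h
    · have : a = c := le_antisymm hac h
      exact Or.inr (Or.inl ⟨by rw [hM, this], by rw [hM]⟩)
    · have : b = c := le_antisymm hbc h
      exact Or.inr (Or.inr ⟨by rw [hM, this], by rw [hM]⟩)
  · have hab : a ≤ b := le_trans h1 (by rw [max_eq_left hbc])
    have hM : max a (max b c) = b := by
      rw [max_eq_left hbc, max_eq_right hab]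
    rcases le_max_iff.mp h2 with h | h
    · have : a = b := le_antisymm hab h
      exact Or.inl ⟨by rw [hM, this], by rw [hM]⟩
    · have : b = c := le_antisymm h hbc
      exact Or.inr (Or.inr ⟨by rw [hM], by rw [hM, this]⟩)

section main

variable {K : ℕ} {vhat : Finset (Fin K) → ℝ}

lemma submod2 (hsub : ∀ A B : Finset (Fin K), vhat (A ∪ B) + vhat (A ∩ B) ≤ vhat A + vhat B)
    {C : Finset (Fin K)} {x y : Fin K} (hx : x ∉ C) (hy : y ∉ C) (hxy : x ≠ y) :
    vhat (insert x (insert y C)) + vhat C ≤ vhat (insert x C) + vhat (insert y C) := by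
  have h := hsub (insert x C) (insert y C)
  have hu : insert x C ∪ insert y C = insert x (insert y C) := by
    ext z
    simp only [Finset.mem_union, Finset.mem_insert]
    tauto
  have hi : insert x C ∩ insert y C = C := by
    ext z
    simp only [Finset.mem_inter, Finset.mem_insert]
    constructor
    · rintro ⟨rfl | h1, h2 | h2⟩
      · exact absurd h2 hxy
      · exact absurd h2 hx
      · exact absurd (h2 ▸ h1) hy
      · exact h1
    · intro h; exact ⟨Or.inr h, Or.inr h⟩
  rw [hu, hi] at h
  linarith

lemma s3max
    (hS3 : ∀ (A : Finset (Fin K)) (i j k : Fin K),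
      i ∉ A → j ∉ A → k ∉ A → i ≠ j → i ≠ k → j ≠ k →
      DoubleMax (vhat (insert i (insert j A)) + vhat (insert k A))
                (vhat (insert i (insert k A)) + vhat (insert j A))
                (vhat (insert j (insert k A)) + vhat (insert i A)))
    {A : Finset (Fin K)} {i j k : Fin K}
    (hi : i ∉ A) (hj : j ∉ A) (hk : k ∉ A) (hij : i ≠ j) (hik : i ≠ k) (hjk : j ≠ k) :
    vhat (insert i (insert j A)) + vhat (insert k A) ≤
      max (vhat (insert i (insert k A)) + vhat (insert j A))
          (vhat (insert j (insert k A)) + vhat (insert i A)) := by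
  rcases dm_cases (hS3 A i j k hi hj hk hij hik hjk) with ⟨e, l⟩ | ⟨e, l⟩ | ⟨e, l⟩
  · rw [e]; exact le_max_left _ _
  · rw [e]; exact le_max_right _ _
  · exact le_trans l (le_max_left _ _)

lemma four_point
    (hS3 : ∀ (A : Finset (Fin K)) (i j k : Fin K),
      i ∉ A → j ∉ A → k ∉ A → i ≠ j → i ≠ k → j ≠ k →
      DoubleMax (vhat (insert i (insert j A)) + vhat (insert k A))
                (vhat (insert i (insert k A)) + vhat (insert j A))
                (vhat (insert j (insert k A)) + vhat (insert i A)))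
    {A : Finset (Fin K)} {p₁ p₂ q₁ q₂ : Fin K}
    (h1 : p₁ ∉ A) (h2 : p₂ ∉ A) (h3 : q₁ ∉ A) (h4 : q₂ ∉ A)
    (d12 : p₁ ≠ p₂) (d13 : p₁ ≠ q₁) (d14 : p₁ ≠ q₂) (d23 : p₂ ≠ q₁) (d24 : p₂ ≠ q₂)
    (d34 : q₁ ≠ q₂) :
    vhat (insert p₁ (insert p₂ A)) + vhat (insert q₁ (insert q₂ A)) ≤
      max (vhat (insert p₂ (insert q₁ A)) + vhat (insert p₁ (insert q₂ A)))
          (vhat (insert p₂ (insert q₂ A)) + vhat (insert p₁ (insert q₁ A))) := by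
  by_contra hcon
  push_neg at hcon
  rw [max_lt_iff] at hcon
  obtain ⟨g1, g2⟩ := hcon
  have T1 := dm_cases (hS3 A p₁ p₂ q₁ h1 h2 h3 d12 d13 d23)
  have T2 := dm_cases (hS3 A p₁ p₂ q₂ h1 h2 h4 d12 d14 d24)
  have T3 := dm_cases (hS3 A q₁ q₂ p₁ h3 h4 h1 d34 d13.symm d14.symm)
  have T4 := dm_cases (hS3 A q₁ q₂ p₂ h3 h4 h2 d34 d23.symm d24.symm)
  rw [Finset.insert_comm q₁ p₁, Finset.insert_comm q₂ p₁] at T3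
  rw [Finset.insert_comm q₁ p₂, Finset.insert_comm q₂ p₂] at T4
  rcases T1 with ⟨e1, l1⟩ | ⟨e1, l1⟩ | ⟨e1, l1⟩ <;>
    rcases T2 with ⟨e2, l2⟩ | ⟨e2, l2⟩ | ⟨e2, l2⟩ <;>
    rcases T3 with ⟨e3, l3⟩ | ⟨e3, l3⟩ | ⟨e3, l3⟩ <;>
    rcases T4 with ⟨e4, l4⟩ | ⟨e4, l4⟩ | ⟨e4, l4⟩ <;>
    linarith

end main
noncomputable section gamma

variable {K : ℕ}

def rePart (W : Finset (Fin K ⊕ ℕ)) : Finset (Fin K) :=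
  W.preimage Sum.inl Sum.inl_injective.injOn

lemma mem_rePart {W : Finset (Fin K ⊕ ℕ)} {x : Fin K} :
    x ∈ rePart W ↔ Sum.inl x ∈ W := Finset.mem_preimage

@[simp] lemma rePart_insert_inl (x : Fin K) (W : Finset (Fin K ⊕ ℕ)) :
    rePart (insert (Sum.inl x) W) = insert x (rePart W) := by
  ext z; simp [mem_rePart]

@[simp] lemma rePart_insert_inr (d : ℕ) (W : Finset (Fin K ⊕ ℕ)) :
    rePart (insert (Sum.inr d) W) = rePart W := by
  ext z; simp [mem_rePart]

@[simp] lemma rePart_erase_inl (x : Fin K) (W : Finset (Fin K ⊕ ℕ)) :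
    rePart (W.erase (Sum.inl x)) = (rePart W).erase x := by
  ext z; simp [mem_rePart, Finset.mem_erase]

@[simp] lemma rePart_erase_inr (d : ℕ) (W : Finset (Fin K ⊕ ℕ)) :
    rePart (W.erase (Sum.inr d)) = rePart W := by
  ext z; simp [mem_rePart, Finset.mem_erase]

lemma rePart_card_le (W : Finset (Fin K ⊕ ℕ)) : (rePart W).card ≤ W.card := by
  apply Finset.card_le_card_of_injOn Sum.inl
  · intro x hx; exact mem_rePart.mp hx
  · exact Sum.inl_injective.injOn

variable {vhat : Finset (Fin K) → ℝ}

lemma localVM'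
    (hsub : ∀ A B : Finset (Fin K), vhat (A ∪ B) + vhat (A ∩ B) ≤ vhat A + vhat B)
    (hS3 : ∀ (A : Finset (Fin K)) (i j k : Fin K),
      i ∉ A → j ∉ A → k ∉ A → i ≠ j → i ≠ k → j ≠ k →
      DoubleMax (vhat (insert i (insert j A)) + vhat (insert k A))
                (vhat (insert i (insert k A)) + vhat (insert j A))
                (vhat (insert j (insert k A)) + vhat (insert i A)))
    {B : Finset (Fin K ⊕ ℕ)} {a i j k : Fin K ⊕ ℕ}
    (haB : a ∉ B) (hiB : i ∉ B) (hjB : j ∉ B) (hkB : k ∉ B)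
    (hai : a ≠ i) (haj : a ≠ j) (hak : a ≠ k) (hij : i ≠ j) (hik : i ≠ k) (hjk : j ≠ k) :
    vhat (rePart (insert a (insert j B))) + vhat (rePart (insert i (insert k B))) ≥
      vhat (rePart (insert a (insert i B))) + vhat (rePart (insert j (insert k B))) ∨
    vhat (rePart (insert a (insert k B))) + vhat (rePart (insert i (insert j B))) ≥
      vhat (rePart (insert a (insert i B))) + vhat (rePart (insert j (insert k B))) := by
  have hmem : ∀ x : Fin K, Sum.inl x ∉ B → x ∉ rePart B := fun x h hx => h (mem_rePart.mp hx)
  have hne : ∀ x y : Fin K, (Sum.inl x : Fin K ⊕ ℕ) ≠ Sum.inl y → x ≠ y := fun x y h e => h (by rw [e])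
  obtain ra | da := a <;> obtain ri | di := i <;> obtain rj | dj := j <;> obtain rk | dk := k <;>
    simp only [rePart_insert_inl, rePart_insert_inr]
  -- (r,r,r,r) : four point
  · have h := four_point hS3 (hmem _ haB) (hmem _ hiB) (hmem _ hjB) (hmem _ hkB)
      (hne _ _ hai) (hne _ _ haj) (hne _ _ hak) (hne _ _ hij) (hne _ _ hik) (hne _ _ hjk)
      (A := rePart B) (p₁ := ra) (p₂ := ri) (q₁ := rj) (q₂ := rk)
    rcases le_max_iff.mp h with h' | h'
    · right; linarith
    · left; linarith
  -- (r,r,r,d) : S3 (ra,ri,rj)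
  · have h := s3max hS3 (hmem _ haB) (hmem _ hiB) (hmem _ hjB)
      (hne _ _ hai) (hne _ _ haj) (hne _ _ hij) (A := rePart B) (i := ra) (j := ri) (k := rj)
    rcases le_max_iff.mp h with h' | h'
    · left; linarith
    · right; linarith
  -- (r,r,d,r) : S3 (ra,ri,rk)
  · have h := s3max hS3 (hmem _ haB) (hmem _ hiB) (hmem _ hkB)
      (hne _ _ hai) (hne _ _ hak) (hne _ _ hik) (A := rePart B) (i := ra) (j := ri) (k := rk)
    rcases le_max_iff.mp h with h' | h'
    · right; linarith
    · left; linarith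
  -- (r,r,d,d) : submod (ra,ri)
  · have h := submod2 hsub (hmem _ haB) (hmem _ hiB) (hne _ _ hai) (C := rePart B)
    left; linarith
  -- (r,d,r,r) : S3 (rj,rk,ra)
  · have h := s3max hS3 (hmem _ hjB) (hmem _ hkB) (hmem _ haB)
      (hne _ _ hjk) (hne _ _ haj.symm) (hne _ _ hak.symm)
      (A := rePart B) (i := rj) (j := rk) (k := ra)
    rw [Finset.insert_comm rj ra (rePart B), Finset.insert_comm rk ra (rePart B)] at h
    rcases le_max_iff.mp h with h' | h'
    · left; linarith
    · right; linarith
  -- (r,d,r,d) : trivial, optK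
  · right; linarith
  -- (r,d,d,r) : trivial, optJ
  · left; linarith
  -- (r,d,d,d) : trivial
  · left; linarith
  -- (d,r,r,r) : S3 (rj,rk,ri)
  · have h := s3max hS3 (hmem _ hjB) (hmem _ hkB) (hmem _ hiB)
      (hne _ _ hjk) (hne _ _ hij.symm) (hne _ _ hik.symm)
      (A := rePart B) (i := rj) (j := rk) (k := ri)
    rw [Finset.insert_comm rj ri (rePart B), Finset.insert_comm rk ri (rePart B)] at h
    rcases le_max_iff.mp h with h' | h'
    · right; linarith
    · left; linarith
  -- (d,r,r,d) : trivial optJ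
  · left; linarith
  -- (d,r,d,r) : trivial optK
  · right; linarith
  -- (d,r,d,d) : trivial
  · left; linarith
  -- (d,d,r,r) : submod (rj,rk)
  · have h := submod2 hsub (hmem _ hjB) (hmem _ hkB) (hne _ _ hjk) (C := rePart B)
    left; linarith
  -- (d,d,r,d) : trivial
  · left; linarith
  -- (d,d,d,r) : trivial
  · left; linarith
  -- (d,d,d,d) : trivial
  · left; linarith

end gamma
section globalExc

variable {K : ℕ} {vhat : Finset (Fin K) → ℝ}

lemma swap_id1 {α : Type*} [DecidableEq α] {X Y : Finset α} {i j : α}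
    (hX : X \ Y = {i}) (hY : Y \ X = {j}) : insert j (X.erase i) = Y := by
  have hjY : j ∈ Y \ X := by rw [hY]; exact Finset.mem_singleton_self j
  have hiX : i ∈ X \ Y := by rw [hX]; exact Finset.mem_singleton_self i
  simp only [Finset.mem_sdiff] at hjY hiX
  ext z
  simp only [Finset.mem_insert, Finset.mem_erase]
  constructor
  · rintro (rfl | ⟨hzi, hzX⟩)
    · exact hjY.1
    · by_contra hzY
      have : z ∈ X \ Y := Finset.mem_sdiff.mpr ⟨hzX, hzY⟩
      rw [hX, Finset.mem_singleton] at this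
      exact hzi this
  · intro hzY
    by_cases hzX : z ∈ X
    · exact Or.inr ⟨fun e => hiX.2 (e ▸ hzY), hzX⟩
    · have : z ∈ Y \ X := Finset.mem_sdiff.mpr ⟨hzY, hzX⟩
      rw [hY, Finset.mem_singleton] at this
      exact Or.inl this

lemma swap_id2 {α : Type*} [DecidableEq α] {X Y : Finset α} {i a j k : α}
    (hX : X \ Y = {i, a}) (hY : Y \ X = {j, k}) (hia : i ≠ a) (hjk : j ≠ k) :
    insert j (X.erase i) = insert a (Y.erase k) := by
  have hiX : i ∈ X \ Y := by rw [hX]; simp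
  have haX : a ∈ X \ Y := by rw [hX]; simp
  have hjY : j ∈ Y \ X := by rw [hY]; simp
  have hkY : k ∈ Y \ X := by rw [hY]; simp
  simp only [Finset.mem_sdiff] at hiX haX hjY hkY
  ext z
  simp only [Finset.mem_insert, Finset.mem_erase]
  constructor
  · rintro (rfl | ⟨hzi, hzX⟩)
    · exact Or.inr ⟨hjk, hjY.1⟩
    · by_cases hzY : z ∈ Y
      · exact Or.inr ⟨fun e => (e ▸ hkY).2 hzX, hzY⟩
      · have : z ∈ X \ Y := Finset.mem_sdiff.mpr ⟨hzX, hzY⟩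
        rw [hX] at this
        rcases Finset.mem_insert.mp this with rfl | h
        · exact absurd rfl hzi
        · exact Or.inl (Finset.mem_singleton.mp h)
  · rintro (rfl | ⟨hzk, hzY⟩)
    · exact Or.inr ⟨fun e => hia e.symm, haX.1⟩
    · by_cases hzX : z ∈ X
      · exact Or.inr ⟨fun e => hiX.2 (e ▸ hzY), hzX⟩
      · have : z ∈ Y \ X := Finset.mem_sdiff.mpr ⟨hzY, hzX⟩
        rw [hY] at this
        rcases Finset.mem_insert.mp this with rfl | h
        · exact Or.inl rfl
        · exact absurd (Finset.mem_singleton.mp h) hzk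

lemma x_id2 {α : Type*} [DecidableEq α] {X Y : Finset α} {i a j k : α}
    (hX : X \ Y = {i, a}) (hY : Y \ X = {j, k}) :
    X = insert a (insert i ((Y.erase j).erase k)) := by
  have hiX : i ∈ X \ Y := by rw [hX]; simp
  have haX : a ∈ X \ Y := by rw [hX]; simp
  have hjY : j ∈ Y \ X := by rw [hY]; simp
  have hkY : k ∈ Y \ X := by rw [hY]; simp
  simp only [Finset.mem_sdiff] at hiX haX hjY hkY
  ext z
  simp only [Finset.mem_insert, Finset.mem_erase]
  constructor
  · intro hzX
    by_cases hzY : z ∈ Y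
    · exact Or.inr (Or.inr ⟨fun e => hkY.2 (e ▸ hzX), fun e => hjY.2 (e ▸ hzX), hzY⟩)
    · have : z ∈ X \ Y := Finset.mem_sdiff.mpr ⟨hzX, hzY⟩
      rw [hX] at this
      rcases Finset.mem_insert.mp this with rfl | h
      · exact Or.inr (Or.inl rfl)
      · exact Or.inl (Finset.mem_singleton.mp h)
  · rintro (rfl | rfl | ⟨hzk, hzj, hzY⟩)
    · exact haX.1
    · exact hiX.1
    · by_contra hzX
      have : z ∈ Y \ X := Finset.mem_sdiff.mpr ⟨hzY, hzX⟩
      rw [hY] at this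
      rcases Finset.mem_insert.mp this with rfl | h
      · exact hzj rfl
      · exact hzk (Finset.mem_singleton.mp h)

lemma sdiff_insert_erase1 {α : Type*} [DecidableEq α] {X Y : Finset α} {a k : α}
    (haX : a ∈ X) (hkX : k ∉ X) :
    X \ (insert a (Y.erase k)) = (X \ Y).erase a := by
  ext z
  simp only [Finset.mem_sdiff, Finset.mem_insert, Finset.mem_erase]
  constructor
  · rintro ⟨hzX, hno⟩
    refine ⟨fun e => hno (Or.inl e), hzX, fun hzY => hno (Or.inr ⟨fun e => hkX (e ▸ hzX), hzY⟩)⟩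
  · rintro ⟨hza, hzX, hzY⟩
    refine ⟨hzX, fun h => ?_⟩
    rcases h with e | ⟨_, hzY'⟩
    · exact hza e
    · exact hzY hzY'

lemma sdiff_insert_erase2 {α : Type*} [DecidableEq α] {X Y : Finset α} {a k : α}
    (haX : a ∈ X) :
    (insert a (Y.erase k)) \ X = (Y \ X).erase k := by
  ext z
  simp only [Finset.mem_sdiff, Finset.mem_insert, Finset.mem_erase]
  constructor
  · rintro ⟨rfl | ⟨hzk, hzY⟩, hzX⟩
    · exact absurd haX hzX
    · exact ⟨hzk, hzY, hzX⟩
  · rintro ⟨hzk, hzY, hzX⟩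
    exact ⟨Or.inr ⟨hzk, hzY⟩, hzX⟩

lemma localVM
    (hsub : ∀ A B : Finset (Fin K), vhat (A ∪ B) + vhat (A ∩ B) ≤ vhat A + vhat B)
    (hS3 : ∀ (A : Finset (Fin K)) (i j k : Fin K),
      i ∉ A → j ∉ A → k ∉ A → i ≠ j → i ≠ k → j ≠ k →
      DoubleMax (vhat (insert i (insert j A)) + vhat (insert k A))
                (vhat (insert i (insert k A)) + vhat (insert j A))
                (vhat (insert j (insert k A)) + vhat (insert i A)))
    {Y : Finset (Fin K ⊕ ℕ)} {a i j k : Fin K ⊕ ℕ}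
    (haY : a ∉ Y) (hiY : i ∉ Y) (hai : a ≠ i) (hjY : j ∈ Y) (hkY : k ∈ Y) (hjk : j ≠ k) :
    vhat (rePart (insert a (Y.erase k))) + vhat (rePart (insert i (Y.erase j))) ≥
      vhat (rePart (insert a (insert i ((Y.erase j).erase k)))) + vhat (rePart Y) ∨
    vhat (rePart (insert a (Y.erase j))) + vhat (rePart (insert i (Y.erase k))) ≥
      vhat (rePart (insert a (insert i ((Y.erase j).erase k)))) + vhat (rePart Y) := by
  set B := (Y.erase j).erase k with hB
  have hjB : j ∉ B := fun h => Finset.notMem_erase j Y (Finset.mem_of_mem_erase h)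
  have hkB : k ∉ B := Finset.notMem_erase k (Y.erase j)
  have haB : a ∉ B := fun h => haY (Finset.mem_of_mem_erase (Finset.mem_of_mem_erase h))
  have hiB : i ∉ B := fun h => hiY (Finset.mem_of_mem_erase (Finset.mem_of_mem_erase h))
  have haj : a ≠ j := fun e => haY (e ▸ hjY)
  have hak : a ≠ k := fun e => haY (e ▸ hkY)
  have hij : i ≠ j := fun e => hiY (e ▸ hjY)
  have hik : i ≠ k := fun e => hiY (e ▸ hkY)
  have hYk : Y.erase k = insert j B := by
    rw [hB, Finset.erase_right_comm]
    exact (Finset.insert_erase (Finset.mem_erase.mpr ⟨hjk, hjY⟩)).symm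
  have hYj : Y.erase j = insert k B := (Finset.insert_erase (Finset.mem_erase.mpr ⟨hjk.symm, hkY⟩ : k ∈ Y.erase j)).symm
  have hYY : Y = insert j (insert k B) := by
    rw [← hYj]
    exact (Finset.insert_erase hjY).symm
  rw [hYk, hYj]
  rw [hYY]
  exact localVM' hsub hS3 haB hiB hjB hkB hai haj hak hij hik hjk

lemma card_sdiff_comm' {α : Type*} [DecidableEq α] {s t : Finset α} (h : s.card = t.card) :
    (s \ t).card = (t \ s).card := by
  have h1 := Finset.card_sdiff_add_card_inter s t
  have h2 := Finset.card_sdiff_add_card_inter t s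
  rw [Finset.inter_comm] at h2
  omega

lemma vmGlobal
    (hsub : ∀ A B : Finset (Fin K), vhat (A ∪ B) + vhat (A ∩ B) ≤ vhat A + vhat B)
    (hS3 : ∀ (A : Finset (Fin K)) (i j k : Fin K),
      i ∉ A → j ∉ A → k ∉ A → i ≠ j → i ≠ k → j ≠ k →
      DoubleMax (vhat (insert i (insert j A)) + vhat (insert k A))
                (vhat (insert i (insert k A)) + vhat (insert j A))
                (vhat (insert j (insert k A)) + vhat (insert i A))) :
    ∀ (n : ℕ) (X Y : Finset (Fin K ⊕ ℕ)), (X \ Y).card = n → (Y \ X).card = n →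
      ∀ i ∈ X \ Y, ∃ j ∈ Y \ X,
        vhat (rePart (insert j (X.erase i))) + vhat (rePart (insert i (Y.erase j))) ≥
          vhat (rePart X) + vhat (rePart Y) := by
  intro n
  induction n using Nat.strong_induction_on with
  | _ n IH =>
  intro X Y hXY hYX i hi
  have hiX : i ∈ X := (Finset.mem_sdiff.mp hi).1
  have hiY : i ∉ Y := (Finset.mem_sdiff.mp hi).2
  match n, hXY, hYX, IH with
  | 0, hXY, hYX, IH =>
    exact absurd (Finset.card_eq_zero.mp hXY ▸ hi) (Finset.notMem_empty i)
  | 1, hXY, hYX, IH =>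
    obtain ⟨j, hj⟩ := Finset.card_eq_one.mp hYX
    have hXi : X \ Y = {i} := by
      obtain ⟨i', hi'⟩ := Finset.card_eq_one.mp hXY
      rw [hi'] at hi ⊢
      rw [Finset.mem_singleton] at hi
      rw [hi]
    have hjY : j ∈ Y \ X := by rw [hj]; exact Finset.mem_singleton_self j
    refine ⟨j, hjY, ?_⟩
    rw [swap_id1 hXi hj, swap_id1 hj hXi]
    linarith
  | 2, hXY, hYX, IH =>
    -- extract X \ Y = {i, a}
    have h2 : ((X \ Y).erase i).card = 1 := by
      rw [Finset.card_erase_of_mem hi, hXY]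
    obtain ⟨a, ha⟩ := Finset.card_eq_one.mp h2
    have haE : a ∈ (X \ Y).erase i := by rw [ha]; exact Finset.mem_singleton_self a
    have haXY : a ∈ X \ Y := Finset.mem_of_mem_erase haE
    have hia : i ≠ a := ((Finset.mem_erase.mp haE).1).symm
    have hXia : X \ Y = {i, a} := by
      rw [← Finset.insert_erase hi, ha]
    obtain ⟨j, k, hjk, hYjk⟩ := Finset.card_eq_two.mp hYX
    have hjY : j ∈ Y \ X := by rw [hYjk]; simp
    have hkY : k ∈ Y \ X := by rw [hYjk]; simp
    have hXP : X = insert a (insert i ((Y.erase j).erase k)) := x_id2 hXia hYjk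
    have haY : a ∉ Y := (Finset.mem_sdiff.mp haXY).2
    have hai : a ≠ i := hia.symm
    rcases localVM hsub hS3 haY hiY hai (Finset.mem_sdiff.mp hjY).1 (Finset.mem_sdiff.mp hkY).1 hjk with h | h
    · refine ⟨j, hjY, ?_⟩
      rw [swap_id2 hXia hYjk hia hjk]
      rw [← hXP] at h
      linarith
    · refine ⟨k, hkY, ?_⟩
      have hYkj : Y \ X = {k, j} := by rw [hYjk]; exact Finset.pair_comm j k
      rw [swap_id2 hXia hYkj hia hjk.symm]
      rw [← hXP] at h
      linarith
  | (m+3), hXY, hYX, IH =>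
    by_contra hcon
    push_neg at hcon
    -- the set of candidate pairs
    have hne1 : ((X \ Y).erase i).Nonempty := by
      rw [← Finset.card_pos, Finset.card_erase_of_mem hi, hXY]
      omega
    have hne2 : (Y \ X).Nonempty := by
      rw [← Finset.card_pos, hYX]; omega
    obtain ⟨p, hpmem, hpmax⟩ := (((X \ Y).erase i) ×ˢ (Y \ X)).exists_max_image
      (fun p => vhat (rePart (insert p.1 (Y.erase p.2))) - vhat (rePart (insert i (Y.erase p.2))))
      (hne1.product hne2)
    obtain ⟨a, k⟩ := p
    rw [Finset.mem_product] at hpmem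
    obtain ⟨haE, hkYX⟩ := hpmem
    have haXY : a ∈ X \ Y := Finset.mem_of_mem_erase haE
    have hai : a ≠ i := (Finset.mem_erase.mp haE).1
    have haX : a ∈ X := (Finset.mem_sdiff.mp haXY).1
    have haY : a ∉ Y := (Finset.mem_sdiff.mp haXY).2
    have hkY : k ∈ Y := (Finset.mem_sdiff.mp hkYX).1
    have hkX : k ∉ X := (Finset.mem_sdiff.mp hkYX).2
    -- the reduced pair
    have e1 : X \ (insert a (Y.erase k)) = (X \ Y).erase a := sdiff_insert_erase1 haX hkX
    have e2 : (insert a (Y.erase k)) \ X = (Y \ X).erase k := sdiff_insert_erase2 haX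
    have c1 : (X \ (insert a (Y.erase k))).card = m + 2 := by
      rw [e1, Finset.card_erase_of_mem haXY, hXY]
      omega
    have c2 : ((insert a (Y.erase k)) \ X).card = m + 2 := by
      rw [e2, Finset.card_erase_of_mem hkYX, hYX]
      omega
    have himem : i ∈ X \ (insert a (Y.erase k)) := by
      rw [e1]
      exact Finset.mem_erase.mpr ⟨fun e => hai e.symm, hi⟩
    obtain ⟨j, hjmem, hIH⟩ := IH (m + 2) (by omega) X (insert a (Y.erase k)) c1 c2 i himem
    rw [e2] at hjmem
    have hjk : j ≠ k := (Finset.mem_erase.mp hjmem).1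
    have hjYX : j ∈ Y \ X := Finset.mem_of_mem_erase hjmem
    have hjY : j ∈ Y := (Finset.mem_sdiff.mp hjYX).1
    have haj : a ≠ j := fun e => haY (e ▸ hjY)
    -- rewrite the middle term of hIH
    have eP : insert i ((insert a (Y.erase k)).erase j) =
        insert a (insert i ((Y.erase j).erase k)) := by
      rw [Finset.erase_insert_of_ne haj, Finset.erase_right_comm, Finset.insert_comm]
    rw [eP] at hIH
    -- local exchange
    rcases localVM hsub hS3 haY hiY hai hjY hkY hjk with h | h
    · have hFj := hcon j hjYX
      linarith
    · have hFj := hcon j hjYX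
      have hmax := hpmax (a, j) (Finset.mem_product.mpr ⟨haE, hjYX⟩)
      simp only at hmax
      linarith

end globalExc
section padding

variable {K : ℕ}

def inlE : Fin K ↪ (Fin K ⊕ ℕ) := ⟨Sum.inl, Sum.inl_injective⟩
def padE {K : ℕ} : ℕ ↪ (Fin K ⊕ ℕ) := ⟨Sum.inr, Sum.inr_injective⟩

noncomputable def pad (S : Finset (Fin K)) (n : ℕ) : Finset (Fin K ⊕ ℕ) :=
  S.map inlE ∪ (Finset.range n).map padE

lemma mem_pad_inl {S : Finset (Fin K)} {n : ℕ} {x : Fin K} :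
    Sum.inl x ∈ pad S n ↔ x ∈ S := by
  simp [pad, inlE, padE]

@[simp] lemma rePart_pad (S : Finset (Fin K)) (n : ℕ) : rePart (pad S n) = S := by
  ext z; rw [mem_rePart, mem_pad_inl]

lemma card_pad (S : Finset (Fin K)) (n : ℕ) : (pad S n).card = S.card + n := by
  rw [pad, Finset.card_union_of_disjoint, Finset.card_map, Finset.card_map, Finset.card_range]
  rw [Finset.disjoint_left]
  rintro z hz1 hz2
  obtain ⟨a, _, rfl⟩ := Finset.mem_map.mp hz1
  obtain ⟨b, _, hb⟩ := Finset.mem_map.mp hz2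
  exact absurd hb (by simp [inlE, padE])

variable {vhat : Finset (Fin K) → ℝ}

lemma pad_exchange
    (hsub : ∀ A B : Finset (Fin K), vhat (A ∪ B) + vhat (A ∩ B) ≤ vhat A + vhat B)
    (hS3 : ∀ (A : Finset (Fin K)) (i j k : Fin K),
      i ∉ A → j ∉ A → k ∉ A → i ≠ j → i ≠ k → j ≠ k →
      DoubleMax (vhat (insert i (insert j A)) + vhat (insert k A))
                (vhat (insert i (insert k A)) + vhat (insert j A))
                (vhat (insert j (insert k A)) + vhat (insert i A)))
    {L : ℕ} {S T : Finset (Fin K)} {x : Fin K}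
    (hS : S.card ≤ L) (hT : T.card ≤ L) (hxS : x ∈ S) (hxT : x ∉ T) :
    (vhat (S.erase x) + vhat (insert x T) ≥ vhat S + vhat T ∧ (insert x T).card ≤ L) ∨
    (∃ y ∈ T, y ∉ S ∧
      vhat (insert y (S.erase x)) + vhat (insert x (T.erase y)) ≥ vhat S + vhat T) := by
  set W₁ := pad S (L - S.card) with hW₁
  set W₂ := pad T (L - T.card) with hW₂
  have c₁ : W₁.card = L := by rw [hW₁, card_pad]; omega
  have c₂ : W₂.card = L := by rw [hW₂, card_pad]; omega
  have hi₁ : Sum.inl x ∈ W₁ := mem_pad_inl.mpr hxS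
  have hi₂ : Sum.inl x ∉ W₂ := fun h => hxT (mem_pad_inl.mp h)
  have hsd : (W₂ \ W₁).card = (W₁ \ W₂).card := card_sdiff_comm' (c₂.trans c₁.symm)
  obtain ⟨j', hj', hex⟩ := vmGlobal hsub hS3 ((W₁ \ W₂).card) W₁ W₂ rfl hsd
    (Sum.inl x) (Finset.mem_sdiff.mpr ⟨hi₁, hi₂⟩)
  have hj'₂ : j' ∈ W₂ := (Finset.mem_sdiff.mp hj').1
  have hj'₁ : j' ∉ W₁ := (Finset.mem_sdiff.mp hj').2
  obtain y | d := j'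
  · -- swap with a real element y ∈ T \ S
    have hyT : y ∈ T := mem_pad_inl.mp hj'₂
    have hyS : y ∉ S := fun h => hj'₁ (mem_pad_inl.mpr h)
    refine Or.inr ⟨y, hyT, hyS, ?_⟩
    simp only [hW₁, hW₂, rePart_insert_inl, rePart_erase_inl, rePart_pad] at hex
    exact hex
  · -- move x from S-side to T-side
    have hcZ : (insert (Sum.inl x) (W₂.erase (Sum.inr d))).card ≤ L := by
      refine le_trans (Finset.card_insert_le _ _) ?_
      rw [Finset.card_erase_of_mem hj'₂, c₂]
      have : 0 < L := lt_of_lt_of_le (Finset.card_pos.mpr ⟨x, hxS⟩) hS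
      omega
    have hre : rePart (insert (Sum.inl x) (W₂.erase (Sum.inr d))) = insert x T := by
      simp only [hW₂, rePart_insert_inl, rePart_erase_inr, rePart_pad]
    have hcard : (insert x T).card ≤ L := by
      rw [← hre]
      exact le_trans (rePart_card_le _) hcZ
    refine Or.inl ⟨?_, hcard⟩
    simp only [hW₁, hW₂, rePart_insert_inl, rePart_insert_inr, rePart_erase_inl,
      rePart_erase_inr, rePart_pad] at hex
    exact hex

end padding
section vlevel

variable {K L : ℕ} {vhat v : Finset (Fin K) → ℝ}

lemma v_ub (hv : ∀ A : Finset (Fin K), IsGreatest {r : ℝ | ∃ B ⊆ A, B.card ≤ L ∧ r = vhat B} (v A))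
    {B A : Finset (Fin K)} (h1 : B ⊆ A) (h2 : B.card ≤ L) : vhat B ≤ v A :=
  (hv A).2 ⟨B, h1, h2, rfl⟩

lemma local_sub_v
    (hsub : ∀ A B : Finset (Fin K), vhat (A ∪ B) + vhat (A ∩ B) ≤ vhat A + vhat B)
    (hS3 : ∀ (A : Finset (Fin K)) (i j k : Fin K),
      i ∉ A → j ∉ A → k ∉ A → i ≠ j → i ≠ k → j ≠ k →
      DoubleMax (vhat (insert i (insert j A)) + vhat (insert k A))
                (vhat (insert i (insert k A)) + vhat (insert j A))
                (vhat (insert j (insert k A)) + vhat (insert i A)))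
    (hv : ∀ A : Finset (Fin K), IsGreatest {r : ℝ | ∃ B ⊆ A, B.card ≤ L ∧ r = vhat B} (v A))
    {C : Finset (Fin K)} {x y : Fin K} (hx : x ∉ C) (hy : y ∉ C) (hxy : x ≠ y) :
    v (insert x (insert y C)) + v C ≤ v (insert x C) + v (insert y C) := by
  obtain ⟨S, hSsub, hScard, hSval⟩ := (hv (insert x (insert y C))).1
  obtain ⟨T, hTsub, hTcard, hTval⟩ := (hv C).1
  by_cases hxS : x ∈ S
  · -- exchange x out of S
    have hxT : x ∉ T := fun h => hx (hTsub h)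
    rcases pad_exchange hsub hS3 hScard hTcard hxS hxT with ⟨hex, hcard⟩ | ⟨z, hzT, hzS, hex⟩
    · have u1 : vhat (S.erase x) ≤ v (insert y C) := by
        refine v_ub hv ?_ (le_trans (Finset.card_erase_le) hScard)
        intro w hw
        have hw1 := hSsub (Finset.mem_of_mem_erase hw)
        rcases Finset.mem_insert.mp hw1 with rfl | hw2
        · exact absurd rfl (Finset.mem_erase.mp hw).1
        · exact hw2
      have u2 : vhat (insert x T) ≤ v (insert x C) := by
        refine v_ub hv ?_ hcard
        intro w hw
        rcases Finset.mem_insert.mp hw with rfl | hw2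
        · exact Finset.mem_insert_self _ _
        · exact Finset.mem_insert_of_mem (hTsub hw2)
      rw [hSval, hTval]; linarith
    · have u1 : vhat (insert z (S.erase x)) ≤ v (insert y C) := by
        refine v_ub hv ?_ ?_
        · intro w hw
          rcases Finset.mem_insert.mp hw with rfl | hw2
          · exact Finset.mem_insert_of_mem (hTsub hzT)
          · have hw1 := hSsub (Finset.mem_of_mem_erase hw2)
            rcases Finset.mem_insert.mp hw1 with rfl | hw3
            · exact absurd rfl (Finset.mem_erase.mp hw2).1
            · exact hw3
        · refine le_trans (Finset.card_insert_le _ _) ?_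
          rw [Finset.card_erase_of_mem hxS]
          have : 0 < S.card := Finset.card_pos.mpr ⟨x, hxS⟩
          omega
      have u2 : vhat (insert x (T.erase z)) ≤ v (insert x C) := by
        refine v_ub hv ?_ ?_
        · intro w hw
          rcases Finset.mem_insert.mp hw with rfl | hw2
          · exact Finset.mem_insert_self _ _
          · exact Finset.mem_insert_of_mem (hTsub (Finset.mem_of_mem_erase hw2))
        · refine le_trans (Finset.card_insert_le _ _) ?_
          rw [Finset.card_erase_of_mem hzT]
          have : 0 < T.card := Finset.card_pos.mpr ⟨z, hzT⟩
          omega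
      rw [hSval, hTval]; linarith
  · -- x ∉ S : S is feasible for insert y C
    have u1 : vhat S ≤ v (insert y C) := by
      refine v_ub hv ?_ hScard
      intro w hw
      rcases Finset.mem_insert.mp (hSsub hw) with rfl | hw2
      · exact absurd hw hxS
      · exact hw2
    have u2 : vhat T ≤ v (insert x C) := by
      refine v_ub hv ?_ hTcard
      exact fun w hw => Finset.mem_insert_of_mem (hTsub hw)
    rw [hSval, hTval]; linarith

lemma s3half
    (hsub : ∀ A B : Finset (Fin K), vhat (A ∪ B) + vhat (A ∩ B) ≤ vhat A + vhat B)
    (hS3 : ∀ (A : Finset (Fin K)) (i j k : Fin K),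
      i ∉ A → j ∉ A → k ∉ A → i ≠ j → i ≠ k → j ≠ k →
      DoubleMax (vhat (insert i (insert j A)) + vhat (insert k A))
                (vhat (insert i (insert k A)) + vhat (insert j A))
                (vhat (insert j (insert k A)) + vhat (insert i A)))
    (hv : ∀ A : Finset (Fin K), IsGreatest {r : ℝ | ∃ B ⊆ A, B.card ≤ L ∧ r = vhat B} (v A))
    {A : Finset (Fin K)} {i j k : Fin K}
    (hi : i ∉ A) (hj : j ∉ A) (hk : k ∉ A) (hij : i ≠ j) (hik : i ≠ k) (hjk : j ≠ k) :
    v (insert i (insert j A)) + v (insert k A) ≤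
      max (v (insert i (insert k A)) + v (insert j A))
          (v (insert j (insert k A)) + v (insert i A)) := by
  obtain ⟨S, hSsub, hScard, hSval⟩ := (hv (insert i (insert j A))).1
  obtain ⟨T, hTsub, hTcard, hTval⟩ := (hv (insert k A)).1
  by_cases hiS : i ∈ S
  · by_cases hjS : j ∈ S
    · -- both i and j in S : exchange i out
      have hiT : i ∉ T := fun h => by
        rcases Finset.mem_insert.mp (hTsub h) with e | e
        · exact hik e
        · exact hi e
      rcases pad_exchange hsub hS3 hScard hTcard hiS hiT with ⟨hex, hcard⟩ | ⟨z, hzT, hzS, hex⟩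
      · -- move case : left branch
        refine le_trans ?_ (le_max_left _ _)
        have u1 : vhat (S.erase i) ≤ v (insert j A) := by
          refine v_ub hv ?_ (le_trans (Finset.card_erase_le) hScard)
          intro w hw
          rcases Finset.mem_insert.mp (hSsub (Finset.mem_of_mem_erase hw)) with rfl | hw2
          · exact absurd rfl (Finset.mem_erase.mp hw).1
          · exact hw2
        have u2 : vhat (insert i T) ≤ v (insert i (insert k A)) := by
          refine v_ub hv ?_ hcard
          intro w hw
          rcases Finset.mem_insert.mp hw with rfl | hw2
          · exact Finset.mem_insert_self _ _
          · exact Finset.mem_insert_of_mem (hTsub hw2)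
        rw [hSval, hTval]; linarith
      · by_cases hzk : z = k
        · -- swap i with k : right branch
          subst hzk
          refine le_trans ?_ (le_max_right _ _)
          have u1 : vhat (insert z (S.erase i)) ≤ v (insert j (insert z A)) := by
            refine v_ub hv ?_ ?_
            · intro w hw
              rcases Finset.mem_insert.mp hw with rfl | hw2
              · exact Finset.mem_insert_of_mem (Finset.mem_insert_self _ _)
              · rcases Finset.mem_insert.mp (hSsub (Finset.mem_of_mem_erase hw2)) with rfl | hw3
                · exact absurd rfl (Finset.mem_erase.mp hw2).1
                · exact Finset.mem_insert.mpr (by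
                    rcases Finset.mem_insert.mp hw3 with e | e
                    · exact Or.inl e
                    · exact Or.inr (Finset.mem_insert_of_mem e))
            · refine le_trans (Finset.card_insert_le _ _) ?_
              rw [Finset.card_erase_of_mem hiS]
              have : 0 < S.card := Finset.card_pos.mpr ⟨i, hiS⟩
              omega
          have u2 : vhat (insert i (T.erase z)) ≤ v (insert i A) := by
            refine v_ub hv ?_ ?_
            · intro w hw
              rcases Finset.mem_insert.mp hw with rfl | hw2
              · exact Finset.mem_insert_self _ _
              · rcases Finset.mem_insert.mp (hTsub (Finset.mem_of_mem_erase hw2)) with e | e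
                · exact absurd e (Finset.mem_erase.mp hw2).1
                · exact Finset.mem_insert_of_mem e
            · refine le_trans (Finset.card_insert_le _ _) ?_
              rw [Finset.card_erase_of_mem hzT]
              have : 0 < T.card := Finset.card_pos.mpr ⟨z, hzT⟩
              omega
          rw [hSval, hTval]; linarith
        · -- swap i with z ∈ A : left branch
          have hzA : z ∈ A := by
            rcases Finset.mem_insert.mp (hTsub hzT) with e | e
            · exact absurd e hzk
            · exact e
          refine le_trans ?_ (le_max_left _ _)
          have u1 : vhat (insert z (S.erase i)) ≤ v (insert j A) := by
            refine v_ub hv ?_ ?_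
            · intro w hw
              rcases Finset.mem_insert.mp hw with rfl | hw2
              · exact Finset.mem_insert_of_mem hzA
              · rcases Finset.mem_insert.mp (hSsub (Finset.mem_of_mem_erase hw2)) with rfl | hw3
                · exact absurd rfl (Finset.mem_erase.mp hw2).1
                · exact hw3
            · refine le_trans (Finset.card_insert_le _ _) ?_
              rw [Finset.card_erase_of_mem hiS]
              have : 0 < S.card := Finset.card_pos.mpr ⟨i, hiS⟩
              omega
          have u2 : vhat (insert i (T.erase z)) ≤ v (insert i (insert k A)) := by
            refine v_ub hv ?_ ?_
            · intro w hw
              rcases Finset.mem_insert.mp hw with rfl | hw2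
              · exact Finset.mem_insert_self _ _
              · exact Finset.mem_insert_of_mem (hTsub (Finset.mem_of_mem_erase hw2))
            · refine le_trans (Finset.card_insert_le _ _) ?_
              rw [Finset.card_erase_of_mem hzT]
              have : 0 < T.card := Finset.card_pos.mpr ⟨z, hzT⟩
              omega
          rw [hSval, hTval]; linarith
    · -- j ∉ S : right branch directly
      refine le_trans ?_ (le_max_right _ _)
      have u1 : vhat S ≤ v (insert i A) := by
        refine v_ub hv ?_ hScard
        intro w hw
        rcases Finset.mem_insert.mp (hSsub hw) with rfl | hw2
        · exact Finset.mem_insert_self _ _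
        · rcases Finset.mem_insert.mp hw2 with rfl | hw3
          · exact absurd hw hjS
          · exact Finset.mem_insert_of_mem hw3
      have u2 : vhat T ≤ v (insert j (insert k A)) := by
        refine v_ub hv ?_ hTcard
        exact fun w hw => Finset.mem_insert_of_mem (hTsub hw)
      rw [hSval, hTval]; linarith
  · -- i ∉ S : left branch directly
    refine le_trans ?_ (le_max_left _ _)
    have u1 : vhat S ≤ v (insert j A) := by
      refine v_ub hv ?_ hScard
      intro w hw
      rcases Finset.mem_insert.mp (hSsub hw) with rfl | hw2
      · exact absurd hw hiS
      · exact hw2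
    have u2 : vhat T ≤ v (insert i (insert k A)) := by
      refine v_ub hv ?_ hTcard
      exact fun w hw => Finset.mem_insert_of_mem (hTsub hw)
    rw [hSval, hTval]; linarith

end vlevel
section chain

variable {K : ℕ} {v : Finset (Fin K) → ℝ}

lemma marg
    (hlocal : ∀ (C : Finset (Fin K)) (x y : Fin K), x ∉ C → y ∉ C → x ≠ y →
      v (insert x (insert y C)) + v C ≤ v (insert x C) + v (insert y C)) :
    ∀ (n : ℕ) (C C' : Finset (Fin K)) (x : Fin K), (C' \ C).card = n → C ⊆ C' → x ∉ C' →
      v (insert x C') + v C ≤ v (insert x C) + v C' := by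
  intro n
  induction n with
  | zero =>
    intro C C' x h0 hsub hx
    have : C' = C := by
      refine Finset.Subset.antisymm ?_ hsub
      intro z hz
      by_contra hzc
      exact (Finset.notMem_empty z)
        ((Finset.card_eq_zero.mp h0) ▸ Finset.mem_sdiff.mpr ⟨hz, hzc⟩)
    rw [this]
  | succ n IHn =>
    intro C C' x hcard hsub hx
    have hne : (C' \ C).Nonempty := by
      rw [← Finset.card_pos, hcard]; omega
    obtain ⟨z, hz⟩ := hne
    have hzC' : z ∈ C' := (Finset.mem_sdiff.mp hz).1
    have hzC : z ∉ C := (Finset.mem_sdiff.mp hz).2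
    have hsub' : C ⊆ C'.erase z := fun w hw =>
      Finset.mem_erase.mpr ⟨fun e => hzC (e ▸ hw), hsub hw⟩
    have hed : (C'.erase z) \ C = (C' \ C).erase z := by
      ext w
      simp only [Finset.mem_sdiff, Finset.mem_erase]
      tauto
    have hcard' : ((C'.erase z) \ C).card = n := by
      rw [hed, Finset.card_erase_of_mem hz, hcard]
      omega
    have hx' : x ∉ C'.erase z := fun h => hx (Finset.mem_of_mem_erase h)
    have IH := IHn C (C'.erase z) x hcard' hsub' hx'
    have hloc := hlocal (C'.erase z) x z hx' (Finset.notMem_erase z C')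
      (fun e => hx (e ▸ hzC'))
    rw [Finset.insert_erase hzC'] at hloc
    linarith

lemma submod_v
    (hlocal : ∀ (C : Finset (Fin K)) (x y : Fin K), x ∉ C → y ∉ C → x ≠ y →
      v (insert x (insert y C)) + v C ≤ v (insert x C) + v (insert y C)) :
    ∀ (n : ℕ) (A B : Finset (Fin K)), (B \ A).card = n →
      v (A ∪ B) + v (A ∩ B) ≤ v A + v B := by
  intro n
  induction n with
  | zero =>
    intro A B h0
    have hBA : B ⊆ A := by
      intro z hz
      by_contra hzc
      exact (Finset.notMem_empty z)
        ((Finset.card_eq_zero.mp h0) ▸ Finset.mem_sdiff.mpr ⟨hz, hzc⟩)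
    rw [Finset.union_eq_left.mpr hBA, Finset.inter_eq_right.mpr hBA]
  | succ n IHn =>
    intro A B hcard
    have hne : (B \ A).Nonempty := by
      rw [← Finset.card_pos, hcard]; omega
    obtain ⟨z, hz⟩ := hne
    have hzB : z ∈ B := (Finset.mem_sdiff.mp hz).1
    have hzA : z ∉ A := (Finset.mem_sdiff.mp hz).2
    have hed : B \ (insert z A) = (B \ A).erase z := by
      ext w
      simp only [Finset.mem_sdiff, Finset.mem_erase, Finset.mem_insert, not_or]
      tauto
    have hcard' : (B \ (insert z A)).card = n := by
      rw [hed, Finset.card_erase_of_mem hz, hcard]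
      omega
    have IH := IHn (insert z A) B hcard'
    have e1 : insert z A ∪ B = A ∪ B := by
      rw [Finset.insert_union, Finset.insert_eq_self.mpr (Finset.mem_union_right _ hzB)]
    have e2 : insert z A ∩ B = insert z (A ∩ B) := Finset.insert_inter_of_mem hzB
    rw [e1, e2] at IH
    have hm := marg hlocal ((A \ (A ∩ B)).card) (A ∩ B) A z rfl
      Finset.inter_subset_left hzA
    linarith

end chain

theorem Lsatiation_substitute {K : ℕ} (L : ℕ) (hL : L ≤ K)
    (vhat v : Finset (Fin K) → ℝ)
    (hv0 : vhat ∅ = 0)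
    (hmono : ∀ A B : Finset (Fin K), A ⊆ B → vhat A ≤ vhat B)
    (hsub : ∀ A B : Finset (Fin K), vhat (A ∪ B) + vhat (A ∩ B) ≤ vhat A + vhat B)
    (hS3 : ∀ (A : Finset (Fin K)) (i j k : Fin K),
      i ∉ A → j ∉ A → k ∉ A → i ≠ j → i ≠ k → j ≠ k →
      DoubleMax (vhat (insert i (insert j A)) + vhat (insert k A))
                (vhat (insert i (insert k A)) + vhat (insert j A))
                (vhat (insert j (insert k A)) + vhat (insert i A)))
    (hv : ∀ A : Finset (Fin K),
      IsGreatest {r : ℝ | ∃ B ⊆ A, B.card ≤ L ∧ r = vhat B} (v A)) :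
    (∀ A B : Finset (Fin K), A ⊆ B → v A ≤ v B) ∧
    (∀ A B : Finset (Fin K), v (A ∪ B) + v (A ∩ B) ≤ v A + v B) ∧
    (∀ (A : Finset (Fin K)) (i j k : Fin K),
      i ∉ A → j ∉ A → k ∉ A → i ≠ j → i ≠ k → j ≠ k →
      DoubleMax (v (insert i (insert j A)) + v (insert k A))
                (v (insert i (insert k A)) + v (insert j A))
                (v (insert j (insert k A)) + v (insert i A))) := by
  have hlocal : ∀ (C : Finset (Fin K)) (x y : Fin K), x ∉ C → y ∉ C → x ≠ y →
      v (insert x (insert y C)) + v C ≤ v (insert x C) + v (insert y C) :=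
    fun C x y hx hy hxy => local_sub_v hsub hS3 hv hx hy hxy
  refine ⟨?_, ?_, ?_⟩
  · intro A B hAB
    obtain ⟨S, h1, h2, h3⟩ := (hv A).1
    rw [h3]
    exact (hv B).2 ⟨S, h1.trans hAB, h2, rfl⟩
  · intro A B
    exact submod_v hlocal ((B \ A).card) A B rfl
  · intro A i j k hi hj hk hij hik hjk
    refine dm_of ?_ ?_ ?_
    · exact s3half hsub hS3 hv hi hj hk hij hik hjk
    · have h := s3half hsub hS3 hv hi hk hj hik hij hjk.symm
      rw [Finset.insert_comm k j A] at h
      exact h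
    · have h := s3half hsub hS3 hv hj hk hi hjk hij.symm hik.symm
      rw [Finset.insert_comm j i A, Finset.insert_comm k i A] at h
      exact h
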